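/- Let d divide q+1 with gcd(d, (q+1)/d) = 1, let ω be a primitive d-th root of unity in F_{q^2}, and let g: μ_{q+1} → μ_{q+1} be a map such that g(x) = A · ω^{ik} · y^n whenever x = ω^i y with y ∈ μ_{(q+1)/d} and 0 ≤ i ≤ d-1, where A ∈ μ_{q+1} is fixed and k, n are fixed integers. Then g is a permutation of μ_{q+1} if and only if gcd(n, (q+1)/d) = 1 and gcd(k, d) = 1. -/

import Mathlib

private lemma pow_eq_pow_of_modEq' {F : Type*} [Monoid F] (x : F) {N a b : ℕ}
    (hx : x ^ N = 1) (h : a ≡ b [MOD N]) : x ^ a = x ^ b := by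
  wlog hab : a ≤ b generalizing a b
  · exact (this h.symm (le_of_not_ge hab)).symm
  obtain ⟨t, ht⟩ := (Nat.modEq_iff_dvd' hab).mp h
  have hb : b = a + N * t := by omega
  rw [hb, pow_add, pow_mul, hx, one_pow, mul_one]

theorem stmt3 (p pn q : ℕ) (hp : p.Prime) (hn : 0 < pn) (hq : q = p ^ pn)
    (F : Type*) [Field F] [Fintype F] (hF : Fintype.card F = q ^ 2)
    (d : ℕ) (hd : 0 < d) (hdvd : d ∣ q + 1) (hcop : Nat.gcd d ((q + 1) / d) = 1)
    (ω : F) (hω : orderOf ω = d)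
    (A : F) (hA : A ^ (q + 1) = 1) (k n : ℕ)
    (g : F → F)
    (hg : ∀ i, i < d → ∀ y : F, y ^ ((q + 1) / d) = 1 →
      g (ω ^ i * y) = A * ω ^ (i * k) * y ^ n) :
    Set.BijOn g {x : F | x ^ (q + 1) = 1} {x : F | x ^ (q + 1) = 1} ↔
      Nat.gcd n ((q + 1) / d) = 1 ∧ Nat.gcd k d = 1 := by
  set m := (q + 1) / d with hmdef
  have hdm : d * m = q + 1 := Nat.mul_div_cancel' hdvd
  have hq2 : 2 ≤ q := by
    subst hq
    calc 2 = 2 ^ 1 := rfl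
    _ ≤ p ^ pn := Nat.pow_le_pow_left hp.two_le pn |>.trans' (Nat.pow_le_pow_right (by omega) hn)
  have hq1 : 1 < q + 1 := by omega
  have hωd : ω ^ d = 1 := by rw [← hω]; exact pow_orderOf_eq_one ω
  haveI : NeZero d := ⟨hd.ne'⟩
  have hprim : IsPrimitiveRoot ω d := hω ▸ IsPrimitiveRoot.orderOf ω
  have hcop' : Nat.Coprime d m := hcop
  obtain ⟨e, hek, hen⟩ := Nat.chineseRemainder hcop' k n
  have hA0 : A ≠ 0 := by
    intro h; rw [h, zero_pow (by omega)] at hA; exact one_ne_zero hA.symm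
  -- decomposition lemma
  have hdec : ∀ x : F, x ^ (q + 1) = 1 → ∃ i < d, ∃ y : F, y ^ m = 1 ∧ x = ω ^ i * y := by
    intro x hx
    obtain ⟨c, hc1, hc0⟩ := Nat.chineseRemainder hcop' 1 0
    obtain ⟨c', hc'0, hc'1⟩ := Nat.chineseRemainder hcop' 0 1
    have hmc : m ∣ c := (Nat.modEq_zero_iff_dvd).mp hc0
    have hdc' : d ∣ c' := (Nat.modEq_zero_iff_dvd).mp hc'0
    have ha : (x ^ c) ^ d = 1 := by
      obtain ⟨t, rfl⟩ := hmc
      rw [← pow_mul, show m * t * d = (q + 1) * t by rw [← hdm]; ring, pow_mul, hx, one_pow]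
    have hy : (x ^ c') ^ m = 1 := by
      obtain ⟨t, rfl⟩ := hdc'
      rw [← pow_mul, show d * t * m = (q + 1) * t by rw [← hdm]; ring, pow_mul, hx, one_pow]
    have hsum : x ^ c * x ^ c' = x := by
      have hmod : c + c' ≡ 1 [MOD q + 1] := by
        rw [← hdm]
        exact (Nat.modEq_and_modEq_iff_modEq_mul hcop').mp
          ⟨by simpa using hc1.add hc'0, by simpa using hc0.add hc'1⟩
      rw [← pow_add, pow_eq_pow_of_modEq' x hx hmod, pow_one]
    obtain ⟨i, hi, hωi⟩ := hprim.eq_pow_of_pow_eq_one ha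
    exact ⟨i, hi, x ^ c', hy, by rw [hωi, hsum]⟩
  -- closed formula for g on the set
  have hform : ∀ x : F, x ^ (q + 1) = 1 → g x = A * x ^ e := by
    intro x hx
    obtain ⟨i, hi, y, hy, rfl⟩ := hdec x hx
    rw [hg i hi y hy, mul_pow, ← pow_mul]
    have h1 : ω ^ (i * e) = ω ^ (i * k) := pow_eq_pow_of_modEq' ω hωd (hek.mul_left i)
    have h2 : y ^ e = y ^ n := pow_eq_pow_of_modEq' y hy hen
    rw [h1, h2, mul_assoc]
  -- translate gcd conditions
  have hgcd1 : Nat.gcd e d = Nat.gcd k d := by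
    have : e % d = k % d := hek
    rw [Nat.gcd_comm e d, Nat.gcd_comm k d, Nat.gcd_rec d e, Nat.gcd_rec d k, this]
  have hgcd2 : Nat.gcd e m = Nat.gcd n m := by
    have : e % m = n % m := hen
    rw [Nat.gcd_comm e m, Nat.gcd_comm n m, Nat.gcd_rec m e, Nat.gcd_rec m n, this]
  have hiff : (Nat.gcd n m = 1 ∧ Nat.gcd k d = 1) ↔ Nat.Coprime e (q + 1) := by
    rw [← hdm, Nat.coprime_mul_iff_right]
    constructor
    · rintro ⟨h1, h2⟩
      exact ⟨show Nat.gcd e d = 1 from hgcd1.trans h2, show Nat.gcd e m = 1 from hgcd2.trans h1⟩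
    · rintro ⟨h1, h2⟩
      exact ⟨hgcd2 ▸ h2, hgcd1 ▸ h1⟩

  constructor
  · intro hbij
    refine hiff.mpr ?_
    by_contra hne
    obtain ⟨pp, hppr, hpdvd⟩ := Nat.exists_prime_and_dvd hne
    have hpe : pp ∣ e := hpdvd.trans (Nat.gcd_dvd_left _ _)
    have hpq1 : pp ∣ q + 1 := hpdvd.trans (Nat.gcd_dvd_right _ _)
    have hsq : q ^ 2 - 1 = (q + 1) * (q - 1) := by
      have h1 : 1 ≤ q ^ 2 := Nat.one_le_pow 2 q (by omega)
      rw [Nat.sub_eq_iff_eq_add h1]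
      obtain ⟨r, rfl⟩ : ∃ r, q = r + 2 := ⟨q - 2, by omega⟩
      have h2 : r + 2 - 1 = r + 1 := by omega
      rw [h2]; ring
    classical
    have hpcard : pp ∣ Fintype.card Fˣ := by
      rw [Fintype.card_units, hF, hsq]
      exact hpq1.trans (Dvd.intro _ rfl)
    haveI := Fact.mk hppr
    obtain ⟨ζ, hζ⟩ := exists_prime_orderOf_dvd_card pp hpcard
    set z := ((ζ : Fˣ) : F) with hzdef
    have hzq : z ^ (q + 1) = 1 := by
      have : ζ ^ (q + 1) = 1 := orderOf_dvd_iff_pow_eq_one.mp (hζ ▸ hpq1)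
      rw [hzdef, ← Units.val_pow_eq_pow_val, this, Units.val_one]
    have hzp : z ^ pp = 1 := by
      have : ζ ^ pp = 1 := by rw [← hζ]; exact pow_orderOf_eq_one ζ
      rw [hzdef, ← Units.val_pow_eq_pow_val, this, Units.val_one]
    have hze : z ^ e = 1 := by
      obtain ⟨t, rfl⟩ := hpe
      rw [pow_mul, hzp, one_pow]
    have h1S : (1 : F) ^ (q + 1) = 1 := one_pow _
    have hgz : g z = g 1 := by
      rw [hform z hzq, hform 1 h1S, hze, one_pow]
    have hz1 : z = 1 := hbij.injOn hzq h1S hgz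
    have : ζ = 1 := Units.ext hz1
    rw [this, orderOf_one] at hζ
    exact hppr.one_lt.ne' hζ.symm
  · rintro ⟨h1, h2⟩
    have hecop : Nat.Coprime e (q + 1) := hiff.mp ⟨h1, h2⟩
    obtain ⟨e', -, he'⟩ := Nat.exists_mul_mod_eq_one_of_coprime hecop hq1
    have hee' : e * e' ≡ 1 [MOD q + 1] := by
      show e * e' % (q + 1) = 1 % (q + 1)
      rw [he', Nat.mod_eq_of_lt hq1]
    refine ⟨?_, ?_, ?_⟩
    · intro x hx
      have hx' : x ^ (q + 1) = 1 := hx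
      show g x ^ (q + 1) = 1
      rw [hform x hx', mul_pow, hA, one_mul, ← pow_mul, mul_comm e (q + 1), pow_mul, hx',
        one_pow]
    · intro x hx x' hx' hgxx
      have hx1 : x ^ (q + 1) = 1 := hx
      have hx1' : x' ^ (q + 1) = 1 := hx'
      rw [hform x hx1, hform x' hx1'] at hgxx
      have hpow : x ^ e = x' ^ e := mul_left_cancel₀ hA0 hgxx
      calc x = x ^ (e * e') := by rw [pow_eq_pow_of_modEq' x hx1 hee', pow_one]
      _ = (x ^ e) ^ e' := by rw [pow_mul]
      _ = (x' ^ e) ^ e' := by rw [hpow]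
      _ = x' ^ (e * e') := by rw [pow_mul]
      _ = x' := by rw [pow_eq_pow_of_modEq' x' hx1' hee', pow_one]
    · intro zz hz
      have hz1 : zz ^ (q + 1) = 1 := hz
      set w := zz * A ^ q with hwdef
      have hw : w ^ (q + 1) = 1 := by
        rw [hwdef, mul_pow, hz1, one_mul, ← pow_mul, mul_comm q (q + 1), pow_mul, hA, one_pow]
      refine ⟨w ^ e', ?_, ?_⟩
      · show (w ^ e') ^ (q + 1) = 1
        rw [← pow_mul, mul_comm e' (q + 1), pow_mul, hw, one_pow]
      · have hmem : (w ^ e') ^ (q + 1) = 1 := by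
          rw [← pow_mul, mul_comm e' (q + 1), pow_mul, hw, one_pow]
        rw [hform _ hmem, ← pow_mul, mul_comm e' e,
          pow_eq_pow_of_modEq' w hw hee', pow_one, hwdef]
        calc A * (zz * A ^ q) = zz * A ^ (q + 1) := by ring
        _ = zz := by rw [hA, mul_one]
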